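/- Let ν ∈ [0,1]. Then ν > √(2/3) if and only if for every p ∈ [0,1], every permutation (A, B, C) of the Pauli matrices (σ_x, σ_y, σ_z), and every s ∈ {+1, −1}, one has ∑_{j ∈ {0,1}} ∑_{k ∈ {0,1}} ‖ (1/2)(I + (−1)^j ν (p A + s(1−p) B)) + (1/2)(I + (−1)^k ν C) ‖ > 6, where ‖·‖ is the operator norm on 2×2 complex matrices. (Equivalently: the three noisy Pauli measurements with equal noise are witnessed, via a quantum advantage exceeding 3/4 in the (2,2,2) random access code for every disjoint-convex-mixing, to be fully incompatible with respect to disjoint-convex-mixing if and only if ν > √(2/3).) -/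

import Mathlib

open Matrix Finset

noncomputable section

/-- The Pauli matrix `σ_x`. -/
def σx : Matrix (Fin 2) (Fin 2) ℂ := !![0, 1; 1, 0]

/-- The Pauli matrix `σ_y`. -/
def σy : Matrix (Fin 2) (Fin 2) ℂ := !![0, -Complex.I; Complex.I, 0]

/-- The Pauli matrix `σ_z`. -/
def σz : Matrix (Fin 2) (Fin 2) ℂ := !![1, 0; 0, -1]

/-- The triple of Pauli matrices. -/
def pauli : Fin 3 → Matrix (Fin 2) (Fin 2) ℂ := ![σx, σy, σz]

/-- The operator norm of a square complex matrix, viewed as an operator on Euclidean space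
(for positive semidefinite matrices this is the largest eigenvalue). -/
def opNorm {n : ℕ} (A : Matrix (Fin n) (Fin n) ℂ) : ℝ :=
  ‖Matrix.toEuclideanCLM (𝕜 := ℂ) A‖

lemma pauli_sq (i : Fin 3) : pauli i * pauli i = 1 := by
  fin_cases i <;>
  · ext a b
    fin_cases a <;> fin_cases b <;>
      simp [pauli, σx, σy, σz, Matrix.mul_apply, Fin.sum_univ_two, Complex.ext_iff]

lemma pauli_anticomm {i j : Fin 3} (h : i ≠ j) :
    pauli i * pauli j + pauli j * pauli i = 0 := by
  fin_cases i <;> fin_cases j <;> simp_all <;>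
  · ext a b
    fin_cases a <;> fin_cases b <;>
      simp [pauli, σx, σy, σz, Matrix.mul_apply, Fin.sum_univ_two, Complex.ext_iff]

lemma pauli_herm (i : Fin 3) : (pauli i)ᴴ = pauli i := by
  fin_cases i <;>
  · ext a b
    fin_cases a <;> fin_cases b <;>
      simp [pauli, σx, σy, σz, Matrix.conjTranspose_apply, Complex.ext_iff]

lemma pauli_trace (i : Fin 3) : Matrix.trace (pauli i) = 0 := by
  fin_cases i <;> simp [pauli, σx, σy, σz, Matrix.trace_fin_two]

lemma N_sq (a b c : ℝ) {i j k : Fin 3} (hij : i ≠ j) (hik : i ≠ k) (hjk : j ≠ k) :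
    ((a:ℂ) • pauli i + (b:ℂ) • pauli j + (c:ℂ) • pauli k) *
    ((a:ℂ) • pauli i + (b:ℂ) • pauli j + (c:ℂ) • pauli k)
    = (((a^2+b^2+c^2 : ℝ)):ℂ) • 1 := by
  have h1 : ((a:ℂ) • pauli i + (b:ℂ) • pauli j + (c:ℂ) • pauli k) *
      ((a:ℂ) • pauli i + (b:ℂ) • pauli j + (c:ℂ) • pauli k) =
      ((a:ℂ)*a) • (pauli i * pauli i) + ((b:ℂ)*b) • (pauli j * pauli j)
      + ((c:ℂ)*c) • (pauli k * pauli k)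
      + ((a:ℂ)*b) • (pauli i * pauli j + pauli j * pauli i)
      + ((a:ℂ)*c) • (pauli i * pauli k + pauli k * pauli i)
      + ((b:ℂ)*c) • (pauli j * pauli k + pauli k * pauli j) := by
    simp only [add_mul, mul_add, smul_mul_assoc, mul_smul_comm, smul_smul, smul_add]
    module
  rw [h1, pauli_sq, pauli_sq, pauli_sq, pauli_anticomm hij, pauli_anticomm hik,
    pauli_anticomm hjk]
  push_cast
  module

set_option maxHeartbeats 1000000 in
set_option synthInstance.maxHeartbeats 400000 in
lemma opNorm_key (a b c : ℝ) {i j k : Fin 3} (hij : i ≠ j) (hik : i ≠ k) (hjk : j ≠ k) :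
    opNorm (1 + ((a:ℂ) • pauli i + (b:ℂ) • pauli j + (c:ℂ) • pauli k))
      = 1 + Real.sqrt (a^2+b^2+c^2) := by
  set N : Matrix (Fin 2) (Fin 2) ℂ := (a:ℂ) • pauli i + (b:ℂ) • pauli j + (c:ℂ) • pauli k
    with hN
  set f := Matrix.toEuclideanCLM (𝕜 := ℂ) (n := Fin 2) with hf
  set s : ℝ := a^2+b^2+c^2 with hs
  have hs0 : 0 ≤ s := by positivity
  set r : ℝ := Real.sqrt s with hr
  have hr0 : 0 ≤ r := Real.sqrt_nonneg s
  have hr2 : r^2 = s := Real.sq_sqrt hs0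
  have hNherm : Nᴴ = N := by
    simp [hN, Matrix.conjTranspose_add, Matrix.conjTranspose_smul, pauli_herm,
      Complex.star_def, Complex.conj_ofReal]
  have hNsq : N * N = ((s:ℝ):ℂ) • 1 := N_sq a b c hij hik hjk
  have hadj : ContinuousLinearMap.adjoint (f N) = f N := by
    have h2 := map_star f N
    rw [Matrix.star_eq_conjTranspose, hNherm] at h2
    exact h2.symm
  have hfN : ‖f N‖ = r := by
    have h2 : ‖ContinuousLinearMap.adjoint (f N) ∘L f N‖ = ‖f N‖ * ‖f N‖ :=
      ContinuousLinearMap.norm_adjoint_comp_self _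
    have h3 : ContinuousLinearMap.adjoint (f N) ∘L f N = f (N * N) := by
      rw [hadj, _root_.map_mul f]
      rfl
    rw [h3, hNsq, _root_.map_smul f, _root_.map_one f] at h2
    rw [norm_smul, norm_one, Complex.norm_real, Real.norm_of_nonneg hs0, mul_one] at h2
    nlinarith [norm_nonneg (f N)]
  have hf1 : f (1 + N) = 1 + f N := by rw [_root_.map_add f, _root_.map_one f]
  have hub : opNorm (1 + N) ≤ 1 + r := by
    calc opNorm (1 + N) = ‖(1 : EuclideanSpace ℂ (Fin 2) →L[ℂ] EuclideanSpace ℂ (Fin 2)) + f N‖ := by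
          rw [opNorm, ← hf, hf1]
      _ ≤ ‖(1 : EuclideanSpace ℂ (Fin 2) →L[ℂ] EuclideanSpace ℂ (Fin 2))‖ + ‖f N‖ := norm_add_le _ _
      _ = 1 + r := by rw [norm_one, hfN]
  have hlb : 1 + r ≤ opNorm (1 + N) := by
    rcases eq_or_lt_of_le hr0 with h0 | hrpos
    · have hNz : N = 0 := by
        have hz : f N = 0 := by
          have h4 := hfN; rw [← h0] at h4
          exact norm_eq_zero.mp h4
        have := f.injective (a₂ := 0) (by simpa using hz)
        simpa using this
      rw [← h0, hNz, add_zero, add_zero, opNorm]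
      have h1 : Matrix.toEuclideanCLM (𝕜 := ℂ) (n := Fin 2) 1 = 1 := _root_.map_one f
      rw [h1, norm_one]
    · set P : Matrix (Fin 2) (Fin 2) ℂ := N + (r:ℂ) • 1 with hP
      have hMP : (1 + N) * P = ((1+r : ℝ):ℂ) • P := by
        have he : (1 + N) * P = N + (r:ℂ) • 1 + (N*N) + (r:ℂ) • N := by
          simp only [hP, add_mul, mul_add, one_mul, mul_one, mul_smul_comm]
          module
        rw [he, hNsq, ← hr2]
        push_cast
        module
      have hPne : P ≠ 0 := by
        intro h
        have htr : Matrix.trace P = 0 := by rw [h]; simp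
        rw [hP, Matrix.trace_add, Matrix.trace_smul, Matrix.trace_one] at htr
        have htrN : Matrix.trace N = 0 := by
          simp [hN, Matrix.trace_add, Matrix.trace_smul, pauli_trace]
        rw [htrN, zero_add] at htr
        simp only [Fintype.card_fin, Nat.cast_ofNat, smul_eq_mul] at htr
        have h1 : r * 2 = 0 := by have h' := congrArg Complex.re htr; simpa using h'
        linarith
      have hfP : (0:ℝ) < ‖f P‖ := by
        rw [norm_pos_iff]
        intro h
        exact hPne (f.injective (a₂ := 0) (by simpa using h))
      have h1 : f (1+N) * f P = ((1+r:ℝ):ℂ) • f P := by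
        rw [← _root_.map_mul f, hMP, _root_.map_smul f]
      obtain ⟨v, hv⟩ : ∃ v, f P v ≠ 0 := by
        by_contra hall
        push_neg at hall
        have : f P = 0 := by ext v; simp [hall]
        exact (ne_of_gt hfP) (by rw [this, norm_zero])
      have happ : f (1+N) (f P v) = ((1+r:ℝ):ℂ) • (f P v) := by
        have := congrArg (fun T => T v) h1
        simpa [ContinuousLinearMap.mul_apply] using this
      have hle : ‖f (1+N) (f P v)‖ ≤ ‖f (1+N)‖ * ‖f P v‖ :=
        ContinuousLinearMap.le_opNorm _ _
      rw [happ, norm_smul, Complex.norm_real, Real.norm_of_nonneg (by linarith)] at hle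
      have hvpos : 0 < ‖f P v‖ := norm_pos_iff.mpr hv
      exact le_of_mul_le_mul_right hle hvpos
  linarith [le_antisymm hub hlb]

lemma neg_one_pow_sq (n : ℕ) : ((-1:ℝ)^n)^2 = 1 := by
  rw [← pow_mul, mul_comm, pow_mul]; norm_num

lemma term_eq (ν p s : ℝ) (σ : Equiv.Perm (Fin 3)) (j k : Fin 2) :
    opNorm ((1/2 : ℂ) • (1 + ((-1 : ℂ)) ^ (j : ℕ) •
        ((ν : ℂ) • ((p : ℂ) • pauli (σ 0) + ((s * (1 - p) : ℝ) : ℂ) • pauli (σ 1)))) +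
      (1/2 : ℂ) • (1 + ((-1 : ℂ)) ^ (k : ℕ) • ((ν : ℂ) • pauli (σ 2))))
    = 1 + Real.sqrt (ν^2 * (p^2 + (s*(1-p))^2 + 1) / 4) := by
  set a : ℝ := (-1:ℝ)^(j:ℕ) * (ν*p) / 2 with ha
  set b : ℝ := (-1:ℝ)^(j:ℕ) * (ν*(s*(1-p))) / 2 with hb
  set c : ℝ := (-1:ℝ)^(k:ℕ) * ν / 2 with hc
  have hmat : (1/2 : ℂ) • (1 + ((-1 : ℂ)) ^ (j : ℕ) •
        ((ν : ℂ) • ((p : ℂ) • pauli (σ 0) + ((s * (1 - p) : ℝ) : ℂ) • pauli (σ 1)))) +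
      (1/2 : ℂ) • (1 + ((-1 : ℂ)) ^ (k : ℕ) • ((ν : ℂ) • pauli (σ 2)))
      = 1 + ((a:ℂ) • pauli (σ 0) + (b:ℂ) • pauli (σ 1) + (c:ℂ) • pauli (σ 2)) := by
    rw [ha, hb, hc]
    push_cast
    module
  rw [hmat, opNorm_key a b c (σ.injective.ne (by decide)) (σ.injective.ne (by decide))
    (σ.injective.ne (by decide))]
  have hj := neg_one_pow_sq (j:ℕ)
  have hk := neg_one_pow_sq (k:ℕ)
  have harg : a^2+b^2+c^2 = ν^2 * (p^2 + (s*(1-p))^2 + 1) / 4 := by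
    rw [ha, hb, hc]
    linear_combination (ν^2*p^2/4 + ν^2*(s*(1-p))^2/4) * hj + (ν^2/4) * hk
  rw [harg]

/-- The three noisy Pauli measurements with equal noise `ν` are witnessed, via a quantum
advantage in the `(2,2,2)` random access code for every disjoint-convex-mixing (every weight
`p`, every permutation `(A,B,C)` of the Pauli matrices and every outcome pairing `s`), to be
fully incompatible w.r.t. disjoint-convex-mixing iff `ν > √(2/3)`. -/
theorem rac_witness_noisy_pauli_iff
    (ν : ℝ) (hν : ν ∈ Set.Icc (0 : ℝ) 1) :
    ν > Real.sqrt (2 / 3) ↔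
    (∀ p ∈ Set.Icc (0 : ℝ) 1, ∀ σ : Equiv.Perm (Fin 3), ∀ s ∈ ({1, -1} : Set ℝ),
      ∑ j : Fin 2, ∑ k : Fin 2,
        opNorm ((1/2 : ℂ) • (1 + ((-1 : ℂ)) ^ (j : ℕ) •
            ((ν : ℂ) • ((p : ℂ) • pauli (σ 0) + ((s * (1 - p) : ℝ) : ℂ) • pauli (σ 1)))) +
          (1/2 : ℂ) • (1 + ((-1 : ℂ)) ^ (k : ℕ) • ((ν : ℂ) • pauli (σ 2))))
        > 6) := by
  obtain ⟨hν0, hν1⟩ := hν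
  have h23 : Real.sqrt (2/3) ^ 2 = 2/3 := Real.sq_sqrt (by norm_num)
  have h23nn : (0:ℝ) ≤ Real.sqrt (2/3) := Real.sqrt_nonneg _
  have hhalf : Real.sqrt (1/4 : ℝ) = 1/2 := by
    rw [show (1/4:ℝ) = (1/2)^2 by norm_num, Real.sqrt_sq (by norm_num)]
  constructor
  · intro hgt p hp σ s hs
    have hsum : ∑ j : Fin 2, ∑ k : Fin 2,
        opNorm ((1/2 : ℂ) • (1 + ((-1 : ℂ)) ^ (j : ℕ) •
            ((ν : ℂ) • ((p : ℂ) • pauli (σ 0) + ((s * (1 - p) : ℝ) : ℂ) • pauli (σ 1)))) +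
          (1/2 : ℂ) • (1 + ((-1 : ℂ)) ^ (k : ℕ) • ((ν : ℂ) • pauli (σ 2))))
        = 4 * (1 + Real.sqrt (ν^2 * (p^2 + (s*(1-p))^2 + 1) / 4)) := by
      simp only [Fin.sum_univ_two, term_eq]
      ring
    rw [hsum]
    have hs2 : s^2 = 1 := by
      rcases hs with rfl | hs
      · norm_num
      · rw [Set.mem_singleton_iff] at hs
        rw [hs]; norm_num
    have hν2 : ν^2 > 2/3 := by nlinarith
    have htgt : ν^2 * (p^2 + (s*(1-p))^2 + 1) / 4 > 1/4 := by
      have h1 : (s*(1-p))^2 = (1-p)^2 := by nlinarith [sq_nonneg (1-p)]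
      rw [h1]
      nlinarith [sq_nonneg (2*p - 1)]
    have := Real.sqrt_lt_sqrt (by norm_num) htgt
    rw [hhalf] at this
    linarith
  · intro h
    by_contra hle
    push_neg at hle
    have hν2 : ν^2 ≤ 2/3 := by nlinarith
    have := h (1/2) (by norm_num) 1 1 (by norm_num)
    have hsum : ∑ j : Fin 2, ∑ k : Fin 2,
        opNorm ((1/2 : ℂ) • (1 + ((-1 : ℂ)) ^ (j : ℕ) •
            ((ν : ℂ) • (((1/2 : ℝ) : ℂ) • pauli ((1 : Equiv.Perm (Fin 3)) 0) +
              (((1:ℝ) * (1 - (1/2:ℝ)) : ℝ) : ℂ) • pauli ((1 : Equiv.Perm (Fin 3)) 1)))) +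
          (1/2 : ℂ) • (1 + ((-1 : ℂ)) ^ (k : ℕ) • ((ν : ℂ) • pauli ((1 : Equiv.Perm (Fin 3)) 2))))
        = 4 * (1 + Real.sqrt (ν^2 * ((1/2:ℝ)^2 + ((1:ℝ)*(1-(1/2:ℝ)))^2 + 1) / 4)) := by
      simp only [Fin.sum_univ_two, term_eq]
      ring
    rw [hsum] at this
    have harg : ν^2 * ((1/2:ℝ)^2 + ((1:ℝ)*(1-(1/2:ℝ)))^2 + 1) / 4 ≤ 1/4 := by nlinarith
    have hle2 : Real.sqrt (ν^2 * ((1/2:ℝ)^2 + ((1:ℝ)*(1-(1/2:ℝ)))^2 + 1) / 4) ≤ 1/2 := by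
      have := Real.sqrt_le_sqrt harg
      rwa [hhalf] at this
    linarith
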